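/- Let n, d be integers with 1 ≤ d ≤ ⌊(n-1)/2⌋. The graph H_{n,d}, obtained from a complete graph on n-d vertices with vertex set A by adding d new vertices each adjacent to the same fixed d vertices of A, is nonhamiltonian, has minimum degree d, and has exactly binomial(n-d, 2) + d² edges. -/

import Mathlib

/-- The graph `H_{n,d}`: a clique `A = {0,…,n-d-1}` together with `d` further vertices
`{n-d,…,n-1}`, each adjacent to the same `d` vertices `{0,…,d-1}` of `A`. -/
def Hnd (n d : ℕ) : SimpleGraph (Fin n) :=
  SimpleGraph.fromRel (fun x y =>
    (x.val < n - d ∧ y.val < n - d) ∨ (x.val < d ∧ n - d ≤ y.val))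

instance {n d : ℕ} : DecidableRel (Hnd n d).Adj := fun x y =>
  decidable_of_iff _ (SimpleGraph.fromRel_adj _ x y).symm

lemma Hnd_adj {n d : ℕ} {x y : Fin n} :
    (Hnd n d).Adj x y ↔ x ≠ y ∧
      ((x.val < n - d ∧ y.val < n - d) ∨ (x.val < d ∧ n - d ≤ y.val) ∨
        (y.val < d ∧ n - d ≤ x.val)) := by
  simp only [Hnd, SimpleGraph.fromRel_adj]
  tauto

lemma card_filter_val (n : ℕ) (q : ℕ → Prop) [DecidablePred q] :
    ((Finset.univ : Finset (Fin n)).filter (fun v => q v.val)).card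
      = ((Finset.range n).filter q).card := by
  rw [Finset.card_filter, Finset.card_filter,
    Fin.sum_univ_eq_sum_range (fun i => if q i then 1 else 0)]

lemma Hnd_degree_D {n d : ℕ} (hn : 2 * d + 1 ≤ n) {v : Fin n} (hv : n - d ≤ v.val) :
    (Hnd n d).degree v = d := by
  rw [← SimpleGraph.card_neighborFinset_eq_degree, SimpleGraph.neighborFinset_eq_filter]
  have h1 : (Finset.univ.filter ((Hnd n d).Adj v)).card
      = ((Finset.univ : Finset (Fin n)).filter (fun w => w.val < d)).card := by
    congr 1
    apply Finset.filter_congr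
    intro w _
    simp only [Hnd_adj, ne_eq, ← Fin.val_ne_iff]
    constructor
    · rintro ⟨h, (⟨h2, h3⟩|⟨h2, h3⟩|⟨h2, h3⟩)⟩ <;> omega
    · intro h; exact ⟨by omega, Or.inr (Or.inr ⟨h, hv⟩)⟩
  rw [h1, card_filter_val n (fun b => b < d)]
  have : (Finset.range n).filter (fun b => b < d) = Finset.range d := by
    ext b; simp only [Finset.mem_filter, Finset.mem_range]; omega
  rw [this, Finset.card_range]

lemma Hnd_degree_S {n d : ℕ} (hn : 2 * d + 1 ≤ n) {v : Fin n} (hv : v.val < d) :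
    (Hnd n d).degree v = n - 1 := by
  rw [← SimpleGraph.card_neighborFinset_eq_degree, SimpleGraph.neighborFinset_eq_filter]
  have h1 : (Finset.univ.filter ((Hnd n d).Adj v)).card
      = ((Finset.univ : Finset (Fin n)).filter (fun w => w.val ≠ v.val)).card := by
    congr 1
    apply Finset.filter_congr
    intro w _
    simp only [Hnd_adj, ne_eq, ← Fin.val_ne_iff]
    constructor
    · rintro ⟨h, _⟩; omega
    · intro h
      refine ⟨by omega, ?_⟩
      by_cases hw : w.val < n - d
      · exact Or.inl ⟨by omega, hw⟩
      · exact Or.inr (Or.inl ⟨hv, by omega⟩)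
  rw [h1, card_filter_val n (fun b => b ≠ v.val)]
  have : (Finset.range n).filter (fun b => b ≠ v.val) = (Finset.range n).erase v.val := by
    ext b
    simp only [Finset.mem_filter, Finset.mem_range, Finset.mem_erase]
    omega
  rw [this, Finset.card_erase_of_mem (by simp [v.isLt]), Finset.card_range]

lemma Hnd_degree_M {n d : ℕ} (hn : 2 * d + 1 ≤ n) {v : Fin n} (hv1 : d ≤ v.val)
    (hv2 : v.val < n - d) : (Hnd n d).degree v = n - d - 1 := by
  rw [← SimpleGraph.card_neighborFinset_eq_degree, SimpleGraph.neighborFinset_eq_filter]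
  have h1 : (Finset.univ.filter ((Hnd n d).Adj v)).card
      = ((Finset.univ : Finset (Fin n)).filter
          (fun w => w.val ≠ v.val ∧ w.val < n - d)).card := by
    congr 1
    apply Finset.filter_congr
    intro w _
    simp only [Hnd_adj, ne_eq, ← Fin.val_ne_iff]
    constructor
    · rintro ⟨h, (⟨h2, h3⟩|⟨h2, h3⟩|⟨h2, h3⟩)⟩ <;> omega
    · rintro ⟨h, h2⟩; exact ⟨by omega, Or.inl ⟨hv2, h2⟩⟩
  rw [h1, card_filter_val n (fun b => b ≠ v.val ∧ b < n - d)]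
  have : (Finset.range n).filter (fun b => b ≠ v.val ∧ b < n - d)
      = (Finset.range (n - d)).erase v.val := by
    ext b
    simp only [Finset.mem_filter, Finset.mem_range, Finset.mem_erase]
    omega
  rw [this, Finset.card_erase_of_mem (by simp [Finset.mem_range]; omega), Finset.card_range]

open Fin.CommRing in
lemma Hnd_not_hamiltonian {n d : ℕ} (hd1 : 1 ≤ d) (hn : 2 * d + 1 ≤ n) :
    ¬ (Hnd n d).IsHamiltonian := by
  intro h
  haveI : NeZero n := ⟨by omega⟩
  obtain ⟨a, p, hp⟩ := h (by simp [Fintype.card_fin]; omega)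
  have hlen : p.length = n := by rw [hp.length_eq, Fintype.card_fin]
  set t : Fin n → Fin n := fun i => p.getVert (i.val + 1) with ht
  -- surjectivity
  have hsurj : Function.Surjective t := by
    intro v
    obtain ⟨m, hm, hmn⟩ := SimpleGraph.Walk.mem_support_iff_exists_getVert.mp (hp.mem_support v)
    rw [hlen] at hmn
    rcases Nat.eq_zero_or_pos m with hm0 | hmpos
    · refine ⟨⟨n - 1, by omega⟩, ?_⟩
      simp only [ht]
      show p.getVert (n - 1 + 1) = v
      rw [show n - 1 + 1 = n from by omega, p.getVert_of_length_le hlen.le, ← hm, hm0,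
        p.getVert_zero]
    · refine ⟨⟨m - 1, by omega⟩, ?_⟩
      simp only [ht]
      show p.getVert (m - 1 + 1) = v
      rw [show m - 1 + 1 = m from by omega, hm]
  have hinj : Function.Injective t := Finite.injective_iff_surjective.mpr hsurj
  -- cyclic adjacency
  have hvaladd : ∀ i : Fin n, ((i + 1 : Fin n)).val = (i.val + 1) % n := by
    intro i
    rw [Fin.add_def, Fin.val_one']
    rw [Nat.mod_eq_of_lt (show 1 < n by omega)]
  have hadj : ∀ i : Fin n, (Hnd n d).Adj (t i) (t (i + 1)) := by
    intro i
    simp only [ht]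
    by_cases hi : i.val + 1 < n
    · have : ((i + 1 : Fin n)).val = i.val + 1 := by rw [hvaladd, Nat.mod_eq_of_lt hi]
      rw [this]
      exact p.adj_getVert_succ (by omega)
    · have hi' : i.val + 1 = n := by have := i.isLt; omega
      have : ((i + 1 : Fin n)).val = 0 := by rw [hvaladd, hi', Nat.mod_self]
      rw [this]
      show (Hnd n d).Adj (p.getVert (i.val + 1)) (p.getVert (0 + 1))
      rw [hi', p.getVert_of_length_le hlen.le]
      have h01 : (Hnd n d).Adj (p.getVert 0) (p.getVert (0 + 1)) := p.adj_getVert_succ (by omega)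
      rwa [p.getVert_zero] at h01
  -- neighbors of D-vertices are in S
  have fact1 : ∀ u w : Fin n, (Hnd n d).Adj u w → n - d ≤ u.val → w.val < d := by
    intro u w huw hu
    rw [Hnd_adj] at huw
    obtain ⟨-, (⟨h2, h3⟩|⟨h2, h3⟩|⟨h2, h3⟩)⟩ := huw <;> omega
  -- the index sets
  set DF : Finset (Fin n) := Finset.univ.filter (fun i => n - d ≤ (t i).val) with hDF
  set SF : Finset (Fin n) := Finset.univ.filter (fun i => (t i).val < d) with hSF
  have hcard : ∀ (q : ℕ → Prop) [DecidablePred q],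
      (Finset.univ.filter (fun i => q (t i).val)).card
        = ((Finset.range n).filter q).card := by
    intro q _
    rw [← card_filter_val n q]
    rw [← Finset.card_image_of_injective _ hinj]
    congr 1
    ext v
    simp only [Finset.mem_image, Finset.mem_filter, Finset.mem_univ, true_and]
    constructor
    · rintro ⟨i, hi, rfl⟩; exact hi
    · intro hv; obtain ⟨i, rfl⟩ := hsurj v; exact ⟨i, hv, rfl⟩
  have hDFcard : DF.card = d := by
    rw [hDF, hcard (fun b => n - d ≤ b)]
    have : (Finset.range n).filter (fun b => n - d ≤ b) = Finset.Ico (n - d) n := by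
      ext b; simp only [Finset.mem_filter, Finset.mem_range, Finset.mem_Ico]; omega
    rw [this, Nat.card_Ico]; omega
  have hSFcard : SF.card = d := by
    rw [hSF, hcard (fun b => b < d)]
    have : (Finset.range n).filter (fun b => b < d) = Finset.range d := by
      ext b; simp only [Finset.mem_filter, Finset.mem_range]; omega
    rw [this, Finset.card_range]
  -- shifts of DF land in SF
  have hplus : ∀ i ∈ DF, i + 1 ∈ SF := by
    intro i hi
    rw [hDF, Finset.mem_filter] at hi
    rw [hSF, Finset.mem_filter]
    exact ⟨Finset.mem_univ _, fact1 _ _ (hadj i) hi.2⟩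
  have hminus : ∀ i ∈ DF, i + (-1) ∈ SF := by
    intro i hi
    rw [hDF, Finset.mem_filter] at hi
    rw [hSF, Finset.mem_filter]
    have := hadj (i + (-1))
    rw [show i + (-1) + 1 = i by ring] at this
    exact ⟨Finset.mem_univ _, fact1 _ _ this.symm hi.2⟩
  -- image equality
  have himg : DF.image (fun i => i + (-1 : Fin n)) = SF := by
    apply Finset.eq_of_subset_of_card_le
    · intro j hj
      obtain ⟨i, hi, rfl⟩ := Finset.mem_image.mp hj
      exact hminus i hi
    · rw [Finset.card_image_of_injective _ (add_left_injective _), hDFcard, hSFcard]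
  -- S-indices step to D-indices
  have hSD : ∀ i ∈ SF, i + 1 ∈ DF := by
    intro i hi
    rw [← himg] at hi
    obtain ⟨j, hj, rfl⟩ := Finset.mem_image.mp hi
    rw [show j + (-1) + 1 = j by ring]
    exact hj
  -- closure of S ∪ D under the cyclic successor
  have hclosed : ∀ i : Fin n, ((t i).val < d ∨ n - d ≤ (t i).val) →
      ((t (i + 1)).val < d ∨ n - d ≤ (t (i + 1)).val) := by
    intro i hi
    rcases hi with hi | hi
    · right
      have := hSD i (by rw [hSF, Finset.mem_filter]; exact ⟨Finset.mem_univ _, hi⟩)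
      rw [hDF, Finset.mem_filter] at this
      exact this.2
    · left
      have := hplus i (by rw [hDF, Finset.mem_filter]; exact ⟨Finset.mem_univ _, hi⟩)
      rw [hSF, Finset.mem_filter] at this
      exact this.2
  -- a starting D-index
  obtain ⟨i0, hi0⟩ := hsurj ⟨n - 1, by omega⟩
  have hi0D : n - d ≤ (t i0).val := by rw [hi0]; simp; omega
  -- propagate around the cycle
  have hall : ∀ k : ℕ, (t (i0 + (k : Fin n))).val < d ∨ n - d ≤ (t (i0 + (k : Fin n))).val := by
    intro k
    induction k with
    | zero => simpa using Or.inr hi0D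
    | succ k ih =>
      have : ((k + 1 : ℕ) : Fin n) = (k : Fin n) + 1 := by push_cast; ring
      rw [this, ← add_assoc]
      exact hclosed _ ih
  -- contradiction at the vertex with value d
  obtain ⟨i, hi⟩ := hsurj ⟨d, by omega⟩
  have := hall (i - i0).val
  rw [Fin.cast_val_eq_self, add_sub_cancel, hi] at this
  simp only [Fin.val_mk] at this
  omega

theorem Hnd_properties (n d : ℕ) (hd1 : 1 ≤ d) (hd2 : d ≤ (n - 1) / 2) :
    ¬ (Hnd n d).IsHamiltonian ∧
    (∀ v, d ≤ (Hnd n d).degree v) ∧ (∃ v, (Hnd n d).degree v = d) ∧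
    (Hnd n d).edgeFinset.card = (n - d).choose 2 + d ^ 2 := by
  have hn : 2 * d + 1 ≤ n := by omega
  refine ⟨Hnd_not_hamiltonian hd1 hn, ?_, ?_, ?_⟩
  · intro v
    rcases lt_or_ge v.val d with hv | hv
    · rw [Hnd_degree_S hn hv]; omega
    rcases lt_or_ge v.val (n - d) with hv2 | hv2
    · rw [Hnd_degree_M hn hv hv2]; omega
    · rw [Hnd_degree_D hn hv2]
  · exact ⟨⟨n - 1, by omega⟩, Hnd_degree_D hn (by simp; omega)⟩
  · obtain ⟨k, rfl⟩ : ∃ k, n = 2 * d + 1 + k := ⟨n - (2 * d + 1), by omega⟩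
    set F : ℕ → ℕ := fun i => if i < d then 2*d+k else if i < d+1+k then d+k else d with hF
    have hdeg : ∀ v : Fin (2*d+1+k), (Hnd (2*d+1+k) d).degree v = F v.val := by
      intro v
      simp only [hF]
      rcases lt_or_ge v.val d with hv | hv
      · rw [Hnd_degree_S hn hv]; split_ifs <;> omega
      rcases lt_or_ge v.val (2*d+1+k - d) with hv2 | hv2
      · rw [Hnd_degree_M hn hv hv2]; split_ifs <;> omega
      · rw [Hnd_degree_D hn hv2]; split_ifs <;> omega
    have hsum : ∑ v : Fin (2*d+1+k), (Hnd (2*d+1+k) d).degree v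
        = ∑ i ∈ Finset.range (2*d+1+k), F i := by
      rw [← Fin.sum_univ_eq_sum_range F]
      exact Finset.sum_congr rfl fun v _ => hdeg v
    have hsplit : ∑ i ∈ Finset.range (2*d+1+k), F i
        = d * (2*d+k) + ((1+k) * (d+k) + d * d) := by
      rw [Finset.range_eq_Ico,
        ← Finset.sum_Ico_consecutive _ (show 0 ≤ d by omega) (show d ≤ 2*d+1+k by omega),
        ← Finset.sum_Ico_consecutive _ (show d ≤ d+1+k by omega)
          (show d+1+k ≤ 2*d+1+k by omega)]
      have hc1 : ∀ i ∈ Finset.Ico 0 d, F i = 2*d+k := by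
        intro i hi
        simp only [Finset.mem_Ico] at hi
        simp only [hF]
        split_ifs <;> omega
      have hc2 : ∀ i ∈ Finset.Ico d (d+1+k), F i = d+k := by
        intro i hi
        simp only [Finset.mem_Ico] at hi
        simp only [hF]
        split_ifs <;> omega
      have hc3 : ∀ i ∈ Finset.Ico (d+1+k) (2*d+1+k), F i = d := by
        intro i hi
        simp only [Finset.mem_Ico] at hi
        simp only [hF]
        split_ifs <;> omega
      rw [Finset.sum_eq_card_nsmul hc1, Finset.sum_eq_card_nsmul hc2,
        Finset.sum_eq_card_nsmul hc3, Nat.card_Ico, Nat.card_Ico, Nat.card_Ico,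
        smul_eq_mul, smul_eq_mul, smul_eq_mul, Nat.sub_zero,
        show d+1+k-d = 1+k by omega, show 2*d+1+k-(d+1+k) = d by omega]
    have h2E : 2 * (Hnd (2*d+1+k) d).edgeFinset.card
        = d * (2*d+k) + ((1+k) * (d+k) + d * d) := by
      rw [← SimpleGraph.sum_degrees_eq_twice_card_edges, hsum, hsplit]
    obtain ⟨t2, ht2⟩ := Nat.even_mul_succ_self (d+k)
    have key : d * (2*d+k) + ((1+k) * (d+k) + d * d) = 2 * (t2 + d^2) := by
      zify at ht2 ⊢
      linear_combination ht2
    have hcard : (Hnd (2*d+1+k) d).edgeFinset.card = t2 + d^2 :=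
      Nat.eq_of_mul_eq_mul_left two_pos (h2E.trans key)
    have hch : (2*d+1+k - d).choose 2 = t2 := by
      rw [show 2*d+1+k - d = d+1+k by omega, Nat.choose_two_right,
        show d+1+k-1 = d+k by omega, show (d+1+k) * (d+k) = (d+k) * ((d+k)+1) by ring, ht2]
      omega
    rw [hcard, hch]
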